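/- Every rapid filter on ω is Lebesgue nonmeasurable (nonmeasurable with respect to the uniform product measure on 2^ω). -/

import Mathlib

open MeasureTheory Filter Set
open scoped ENNReal

/-- `μ` is the product (Bernoulli) measure on `Bool^ι` determined by the sequence `p`:
a probability measure giving each cylinder set its natural product value. -/
def IsBernoulli {ι : Type*} (μ : Measure (ι → Bool)) (p : ι → ℝ≥0∞) : Prop :=
  IsProbabilityMeasure μ ∧
    ∀ (s : Finset ι) (f : ι → Bool),
      μ {x | ∀ i ∈ s, x i = f i} = ∏ i ∈ s, (if f i then p i else 1 - p i)

/-- The subset of `2^ω` corresponding to a filter on `ω`, via characteristic functions. -/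
def filterSet (F : Filter ℕ) : Set (ℕ → Bool) := {x | {n | x n = true} ∈ F}


namespace RapidAux

def cyl (s : Finset ℕ) (f : ℕ → Bool) : Set (ℕ → Bool) := {x | ∀ i ∈ s, x i = f i}

lemma measurableSet_cyl (s : Finset ℕ) (f : ℕ → Bool) : MeasurableSet (cyl s f) := by
  have h : cyl s f = ⋂ i ∈ s, (fun x : ℕ → Bool => x i) ⁻¹' {f i} := by
    ext x; simp [cyl]
  rw [h]
  exact MeasurableSet.biInter s.countable_toSet fun i _ =>
    (measurable_pi_apply i) (measurableSet_singleton _)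

def cylSets : Set (Set (ℕ → Bool)) := {S | ∃ s f, S = cyl s f}

lemma isPiSystem_cylSets : IsPiSystem cylSets := by
  rintro _ ⟨s, f, rfl⟩ _ ⟨t, g, rfl⟩ ⟨x, hxs, hxt⟩
  refine ⟨s ∪ t, fun i => if i ∈ s then f i else g i, ?_⟩
  ext y
  constructor
  · rintro ⟨hys, hyt⟩ i hi
    rcases Finset.mem_union.1 hi with h | h
    · simp [h, hys i h]
    · by_cases h' : i ∈ s
      · simp [h', hys i h']
      · simp [h', hyt i h]
  · intro hy
    constructor
    · intro i hi
      have := hy i (Finset.mem_union_left _ hi); simpa [hi] using this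
    · intro i hi
      have := hy i (Finset.mem_union_right _ hi)
      by_cases h' : i ∈ s
      · rw [this]; simp only [h', if_true]
        rw [← hxs i h', hxt i hi]
      · simpa [h'] using this

lemma generateFrom_cylSets :
    (inferInstance : MeasurableSpace (ℕ → Bool)) = MeasurableSpace.generateFrom cylSets := by
  refine le_antisymm ?_ ?_
  · rw [show (inferInstance : MeasurableSpace (ℕ → Bool)) = MeasurableSpace.pi from rfl,
      MeasurableSpace.pi]
    refine iSup_le fun i => ?_
    rintro _ ⟨S, -, rfl⟩
    have htrue : MeasurableSet[MeasurableSpace.generateFrom cylSets]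
        ((fun b : ℕ → Bool => b i) ⁻¹' {true}) := by
      refine MeasurableSpace.measurableSet_generateFrom ⟨{i}, fun _ => true, ?_⟩
      ext x; simp [cyl]
    have hfalse : MeasurableSet[MeasurableSpace.generateFrom cylSets]
        ((fun b : ℕ → Bool => b i) ⁻¹' {false}) := by
      refine MeasurableSpace.measurableSet_generateFrom ⟨{i}, fun _ => false, ?_⟩
      ext x; simp [cyl]
    have : S = ⋃ b ∈ S, {b} := by simp
    rw [this]
    rw [preimage_iUnion₂]
    refine MeasurableSet.biUnion (Set.to_countable S) fun b hb => ?_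
    cases b
    · exact hfalse
    · exact htrue
  · refine MeasurableSpace.generateFrom_le ?_
    rintro _ ⟨s, f, rfl⟩
    exact measurableSet_cyl s f


lemma prod_half (s : Finset ℕ) (f : ℕ → Bool) :
    (∏ i ∈ s, (if f i then (1:ℝ≥0∞)/2 else 1 - 1/2)) = 2⁻¹ ^ s.card := by
  rw [Finset.prod_congr rfl (fun i _ => ?_), Finset.prod_const]
  by_cases h : f i <;> simp [h, ENNReal.one_sub_inv_two, one_div]

lemma bern_cyl {μ : Measure (ℕ → Bool)} (hμ : IsBernoulli μ fun _ => 1/2)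
    (s : Finset ℕ) (f : ℕ → Bool) : μ (cyl s f) = 2⁻¹ ^ s.card := by
  have h := hμ.2 s f
  rw [cyl]; rw [h, prod_half]

lemma bernoulli_unique {μ ν : Measure (ℕ → Bool)}
    (hμ : IsBernoulli μ fun _ => 1/2) (hν : IsBernoulli ν fun _ => 1/2) : μ = ν := by
  haveI := hμ.1; haveI := hν.1
  refine MeasureTheory.ext_of_generate_finite cylSets generateFrom_cylSets
    isPiSystem_cylSets ?_ (by simp)
  rintro _ ⟨s, f, rfl⟩
  rw [bern_cyl hμ, bern_cyl hν]

lemma map_eq_self {μ : Measure (ℕ → Bool)} (hμ : IsBernoulli μ fun _ => 1/2)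
    {T : (ℕ → Bool) → (ℕ → Bool)} (hT : Measurable T)
    (hcyl : ∀ s f, ∃ g, T ⁻¹' cyl s f = cyl s g) : μ.map T = μ := by
  haveI := hμ.1
  refine bernoulli_unique ⟨Measure.isProbabilityMeasure_map hT.aemeasurable, fun s f => ?_⟩ hμ
  have h1 : {x : ℕ → Bool | ∀ i ∈ s, x i = f i} = cyl s f := rfl
  obtain ⟨g, hg⟩ := hcyl s f
  rw [h1, Measure.map_apply hT (measurableSet_cyl s f), hg, bern_cyl hμ, prod_half]

/-- XOR map -/
def xorMap (g : ℕ → Bool) (x : ℕ → Bool) : ℕ → Bool := fun i => xor (g i) (x i)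

lemma measurable_xorMap (g : ℕ → Bool) : Measurable (xorMap g) :=
  measurable_pi_lambda _ fun i =>
    (Measurable.of_discrete (f := fun b => xor (g i) b)).comp (measurable_pi_apply i)

lemma xor_solve : ∀ a b c : Bool, (xor a b = c ↔ b = xor a c) := by decide

lemma xorMap_preimage_cyl (g : ℕ → Bool) (s : Finset ℕ) (f : ℕ → Bool) :
    xorMap g ⁻¹' cyl s f = cyl s (fun i => xor (g i) (f i)) := by
  ext x
  exact forall₂_congr fun i _ => xor_solve (g i) (x i) (f i)

lemma map_xorMap {μ : Measure (ℕ → Bool)} (hμ : IsBernoulli μ fun _ => 1/2) (g : ℕ → Bool) :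
    μ.map (xorMap g) = μ :=
  map_eq_self hμ (measurable_xorMap g) fun s f => ⟨_, xorMap_preimage_cyl g s f⟩

lemma xorMap_null {μ : Measure (ℕ → Bool)} (hμ : IsBernoulli μ fun _ => 1/2) (g : ℕ → Bool)
    {N : Set (ℕ → Bool)} (hN : μ N = 0) : μ (xorMap g ⁻¹' N) = 0 := by
  have hmp : MeasurePreserving (xorMap g) μ μ := ⟨measurable_xorMap g, map_xorMap hμ g⟩
  exact hmp.quasiMeasurePreserving.preimage_null hN

/-- mem congr mod finite for filters below cofinite -/
lemma mem_congr_of_finite {F : Filter ℕ} (hF : F ≤ Filter.cofinite) {S S' : Set ℕ}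
    (hfin : {n | ¬ (n ∈ S ↔ n ∈ S')}.Finite) (hS : S ∈ F) : S' ∈ F := by
  have hco : {n | ¬ (n ∈ S ↔ n ∈ S')}ᶜ ∈ F := hF (by simpa [Filter.mem_cofinite] using hfin)
  refine Filter.mem_of_superset (Filter.inter_mem hS hco) ?_
  rintro n ⟨hn1, hn2⟩
  simp only [mem_compl_iff, mem_setOf_eq, not_not] at hn2
  exact hn2.1 hn1

lemma xorMap_preimage_filterSet {F : Filter ℕ} (hF : F ≤ Filter.cofinite) {g : ℕ → Bool}
    (hg : {i | g i = true}.Finite) : xorMap g ⁻¹' filterSet F = filterSet F := by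
  ext x
  simp only [mem_preimage, filterSet, mem_setOf_eq, xorMap]
  constructor
  · intro h
    refine mem_congr_of_finite hF (S := {n | xor (g n) (x n) = true}) ?_ h
    refine hg.subset fun n hn => ?_
    simp only [mem_setOf_eq] at hn ⊢
    by_contra hgn
    have : g n = false := by simpa using hgn
    simp [this] at hn
  · intro h
    refine mem_congr_of_finite hF (S := {n | x n = true}) ?_ h
    refine hg.subset fun n hn => ?_
    simp only [mem_setOf_eq] at hn ⊢
    by_contra hgn
    have : g n = false := by simpa using hgn
    simp [this] at hn

open Classical in
/-- forcing map -/
noncomputable def phi (X : Set ℕ) (x : ℕ → Bool) : ℕ → Bool := fun i =>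
  if i ∈ X then true else x i

lemma measurable_phi (X : Set ℕ) : Measurable (phi X) := by
  classical
  refine measurable_pi_lambda _ fun i => ?_
  by_cases h : i ∈ X <;> simp only [phi, h, if_true, if_false]
  · exact measurable_const
  · exact measurable_pi_apply i

lemma phi_mem_filterSet {F : Filter ℕ} {X : Set ℕ} (hX : X ∈ F) (x : ℕ → Bool) :
    phi X x ∈ filterSet F := by
  refine Filter.mem_of_superset hX fun n hn => ?_
  simp [phi, hn]


lemma cyl_congr {s : Finset ℕ} {f g : ℕ → Bool} (h : ∀ i ∈ s, f i = g i) :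
    cyl s f = cyl s g := by
  ext x
  exact forall₂_congr fun i hi => by rw [h i hi]

lemma xor_xor_cancel : ∀ a b : Bool, xor (xor a b) b = a := by decide

lemma inter_ae_eq {μ : Measure (ℕ → Bool)} {S S' T T' : Set (ℕ → Bool)}
    (h : S =ᵐ[μ] S') (h' : T =ᵐ[μ] T') : (S ∩ T : Set (ℕ → Bool)) =ᵐ[μ] (S' ∩ T' : Set (ℕ → Bool)) := by
  rw [MeasureTheory.ae_eq_set] at h h' ⊢
  constructor
  · refine measure_mono_null (fun x hx => ?_) (measure_union_null h.1 h'.1)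
    rcases hx with ⟨⟨hxS, hxT⟩, hx2⟩
    by_cases hS' : x ∈ S'
    · right
      exact ⟨hxT, fun hT' => hx2 ⟨hS', hT'⟩⟩
    · exact Or.inl ⟨hxS, hS'⟩
  · refine measure_mono_null (fun x hx => ?_) (measure_union_null h.2 h'.2)
    rcases hx with ⟨⟨hxS, hxT⟩, hx2⟩
    by_cases hS : x ∈ S
    · right
      exact ⟨hxT, fun hT => hx2 ⟨hS, hT⟩⟩
    · exact Or.inl ⟨hxS, hS⟩

lemma xorMap_preimage_ae_eq {μ : Measure (ℕ → Bool)} (hμ : IsBernoulli μ fun _ => 1/2)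
    (g : ℕ → Bool) {S S' : Set (ℕ → Bool)} (h : S =ᵐ[μ] S') :
    xorMap g ⁻¹' S =ᵐ[μ] xorMap g ⁻¹' S' := by
  rw [MeasureTheory.ae_eq_set] at h ⊢
  constructor
  · rw [← Set.preimage_diff]; exact xorMap_null hμ g h.1
  · rw [← Set.preimage_diff]; exact xorMap_null hμ g h.2

lemma filterSet_null {μ : Measure (ℕ → Bool)} (hμ : IsBernoulli μ fun _ => 1/2)
    {F : Filter ℕ} [F.NeBot] (hF : F ≤ Filter.cofinite)
    (hm : NullMeasurableSet (filterSet F) μ) : μ (filterSet F) = 0 := by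
  classical
  haveI := hμ.1
  set A := filterSet F with hA
  set B := toMeasurable μ A with hBdef
  have hB : MeasurableSet B := measurableSet_toMeasurable μ A
  have hAB : B =ᵐ[μ] A := hm.toMeasurable_ae_eq
  have hμAB : μ A = μ B := (measure_toMeasurable A).symm
  -- a.e. invariance of B under xorMap with finite support
  have hinv : ∀ g : ℕ → Bool, {i | g i = true}.Finite → xorMap g ⁻¹' B =ᵐ[μ] B := by
    intro g hg
    have h1 : xorMap g ⁻¹' B =ᵐ[μ] xorMap g ⁻¹' A := xorMap_preimage_ae_eq hμ g hAB
    have h2 : xorMap g ⁻¹' A = A := xorMap_preimage_filterSet hF hg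
    rw [h2] at h1
    exact h1.trans hAB.symm
  have hMP : ∀ g : ℕ → Bool, MeasurePreserving (xorMap g) μ μ :=
    fun g => ⟨measurable_xorMap g, map_xorMap hμ g⟩
  -- step a
  have stepa : ∀ (s : Finset ℕ) (f g : ℕ → Bool),
      μ (B ∩ cyl s f) = μ (B ∩ cyl s g) := by
    intro s f g
    set h : ℕ → Bool := fun i => if i ∈ s then xor (f i) (g i) else false with hh
    have hfin : {i | h i = true}.Finite := by
      refine s.finite_toSet.subset fun i hi => ?_
      simp only [hh, mem_setOf_eq] at hi
      by_cases his : i ∈ s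
      · exact Finset.mem_coe.2 his
      · simp [his] at hi
    have hpre : xorMap h ⁻¹' cyl s g = cyl s f := by
      rw [xorMap_preimage_cyl]
      refine cyl_congr fun i hi => ?_
      simp only [hh, hi, if_true]
      exact xor_xor_cancel (f i) (g i)
    have hae : (B ∩ cyl s f : Set (ℕ → Bool)) =ᵐ[μ] (xorMap h ⁻¹' (B ∩ cyl s g) : Set (ℕ → Bool)) := by
      rw [preimage_inter, hpre]
      exact inter_ae_eq ((hinv h hfin).symm) (ae_eq_refl _)
    rw [measure_congr hae,
      (hMP h).measure_preimage (hB.inter (measurableSet_cyl s g)).nullMeasurableSet]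
  -- partition
  have hpart : ∀ (s : Finset ℕ) (f : ℕ → Bool),
      μ (B ∩ cyl s f) * 2 ^ s.card = μ B := by
    intro s f
    set ext : ({x // x ∈ s} → Bool) → (ℕ → Bool) :=
      fun v i => if h : i ∈ s then v ⟨i, h⟩ else false with hext
    have hcover : (⋃ v : {x // x ∈ s} → Bool, B ∩ cyl s (ext v)) = B := by
      ext x
      simp only [mem_iUnion, mem_inter_iff]
      constructor
      · rintro ⟨v, hv, -⟩; exact hv
      · intro hx
        exact ⟨fun j => x j.1, hx, fun i hi => by simp [hext, hi]⟩
    have hdisj : Pairwise (Function.onFun Disjoint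
        fun v : {x // x ∈ s} → Bool => B ∩ cyl s (ext v)) := by
      intro v w hvw
      refine Set.disjoint_left.2 ?_
      rintro x ⟨-, hxv⟩ ⟨-, hxw⟩
      refine hvw ?_
      funext j
      have h1 := hxv j.1 j.2
      have h2 := hxw j.1 j.2
      simp only [hext, j.2, dif_pos] at h1 h2
      rw [← h1, ← h2]
    have hmeas : ∀ v : {x // x ∈ s} → Bool, MeasurableSet (B ∩ cyl s (ext v)) :=
      fun v => hB.inter (measurableSet_cyl s (ext v))
    have hsum : μ B = ∑' v : {x // x ∈ s} → Bool, μ (B ∩ cyl s (ext v)) := by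
      have h0 : μ (⋃ v : {x // x ∈ s} → Bool, B ∩ cyl s (ext v))
          = ∑' v : {x // x ∈ s} → Bool, μ (B ∩ cyl s (ext v)) := measure_iUnion hdisj hmeas
      rw [hcover] at h0
      exact h0
    rw [tsum_fintype] at hsum
    have heach : ∀ v : {x // x ∈ s} → Bool,
        μ (B ∩ cyl s (ext v)) = μ (B ∩ cyl s f) := fun v => stepa s (ext v) f
    rw [Finset.sum_congr rfl (fun v _ => heach v), Finset.sum_const] at hsum
    have hcard : (Finset.univ : Finset ({x // x ∈ s} → Bool)).card = 2 ^ s.card := by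
      rw [Finset.card_univ, Fintype.card_fun]
      simp [Fintype.card_coe]
    rw [hsum, hcard, nsmul_eq_mul]
    push_cast
    ring
  -- restrict = smul
  have hrs : μ.restrict B = (μ B) • μ := by
    refine MeasureTheory.ext_of_generate_finite cylSets generateFrom_cylSets
      isPiSystem_cylSets ?_ ?_
    · rintro _ ⟨s, f, rfl⟩
      rw [Measure.restrict_apply (measurableSet_cyl s f), Measure.smul_apply, smul_eq_mul,
        bern_cyl hμ, inter_comm]
      have h2 : ((2:ℝ≥0∞) ^ s.card) * ((2:ℝ≥0∞) ^ s.card)⁻¹ = 1 :=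
        ENNReal.mul_inv_cancel (by positivity) (ENNReal.pow_ne_top ENNReal.ofNat_ne_top)
      calc μ (B ∩ cyl s f) = μ (B ∩ cyl s f) * (((2:ℝ≥0∞) ^ s.card) * ((2:ℝ≥0∞) ^ s.card)⁻¹) := by
            rw [h2, mul_one]
        _ = (μ (B ∩ cyl s f) * 2 ^ s.card) * ((2:ℝ≥0∞) ^ s.card)⁻¹ := by ring
        _ = μ B * ((2:ℝ≥0∞) ^ s.card)⁻¹ := by rw [hpart s f]
        _ = μ B * 2⁻¹ ^ s.card := by rw [← ENNReal.inv_pow]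
    · rw [Measure.restrict_apply MeasurableSet.univ, Measure.smul_apply, smul_eq_mul,
        univ_inter, measure_univ, mul_one]
  have hBB : μ B = μ B * μ B := by
    have := congrArg (fun m : Measure (ℕ → Bool) => m B) hrs
    simpa [Measure.restrict_apply hB, smul_eq_mul] using this
  have h01 : μ B = 0 ∨ μ B = 1 := by
    by_cases h0 : μ B = 0
    · exact Or.inl h0
    · right
      have hne : μ B ≠ ⊤ := measure_ne_top μ B
      have := (ENNReal.mul_right_inj h0 hne (b := 1) (c := μ B)).1 (by rw [mul_one, ← hBB])
      exact this.symm
  -- rule out 1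
  rcases h01 with h0 | h1
  · rw [hμAB]; exact h0
  · exfalso
    set g : ℕ → Bool := fun _ => true with hg
    have hTA : xorMap g ⁻¹' A ∩ A = ∅ := by
      ext x
      simp only [mem_inter_iff, mem_preimage, mem_empty_iff_false, iff_false, not_and]
      intro hx1 hx2
      have hmem : ({n | xor (g n) (x n) = true} ∩ {n | x n = true} : Set ℕ) ∈ F :=
        Filter.inter_mem hx1 hx2
      have : ({n | xor (g n) (x n) = true} ∩ {n | x n = true} : Set ℕ) = ∅ := by
        ext n
        simp only [mem_inter_iff, mem_setOf_eq, hg, mem_empty_iff_false, iff_false, not_and]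
        intro h1 h2
        rw [h2] at h1
        simp at h1
      rw [this] at hmem
      exact (Filter.empty_notMem F) hmem
    have hpreB : xorMap g ⁻¹' B =ᵐ[μ] xorMap g ⁻¹' A := xorMap_preimage_ae_eq hμ g hAB
    have hae0 : μ (xorMap g ⁻¹' B ∩ B) = 0 := by
      have : (xorMap g ⁻¹' B ∩ B : Set (ℕ → Bool)) =ᵐ[μ] (xorMap g ⁻¹' A ∩ A : Set (ℕ → Bool)) :=
        inter_ae_eq hpreB hAB
      rw [measure_congr this, hTA, measure_empty]
    have hTBmeas : MeasurableSet (xorMap g ⁻¹' B) := (measurable_xorMap g) hB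
    have hμTB : μ (xorMap g ⁻¹' B) = 1 := by
      rw [(hMP g).measure_preimage hB.nullMeasurableSet, h1]
    have hcompl : μ ((xorMap g ⁻¹' B)ᶜ ∪ Bᶜ) = 0 := by
      refine le_antisymm ?_ zero_le
      calc μ ((xorMap g ⁻¹' B)ᶜ ∪ Bᶜ) ≤ μ (xorMap g ⁻¹' B)ᶜ + μ Bᶜ := measure_union_le _ _
        _ = 0 := by
            rw [measure_compl hTBmeas (measure_ne_top μ _), hμTB,
              measure_compl hB (measure_ne_top μ _), h1, measure_univ]
            simp
    have : (1:ℝ≥0∞) ≤ 0 := by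
      calc (1:ℝ≥0∞) = μ univ := measure_univ.symm
        _ ≤ μ (xorMap g ⁻¹' B ∩ B) + μ ((xorMap g ⁻¹' B ∩ B)ᶜ) := by
            rw [← union_compl_self (xorMap g ⁻¹' B ∩ B)] ; exact measure_union_le _ _
        _ = 0 := by rw [hae0, Set.compl_inter, hcompl, add_zero]
    simp at this


lemma measurable_of_determined {n : ℕ} {W : Set (ℕ → Bool)}
    (hdet : ∀ x y : ℕ → Bool, (∀ i, i < n → x i = y i) → x ∈ W → y ∈ W) :
    MeasurableSet W := by
  classical
  set ρ : (ℕ → Bool) → (Fin n → Bool) := fun x i => x i.1 with hρ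
  have hρm : Measurable ρ := measurable_pi_lambda _ fun i => measurable_pi_apply i.1
  have hW : W = ρ ⁻¹' (ρ '' W) := by
    apply subset_antisymm
    · exact Set.subset_preimage_image ρ W
    · rintro x ⟨w, hwW, hwx⟩
      exact hdet w x (fun i hi => congrFun hwx ⟨i, hi⟩) hwW
  rw [hW]
  exact hρm ((Set.to_countable _).measurableSet)

lemma phi_bound {μ : Measure (ℕ → Bool)} (hμ : IsBernoulli μ fun _ => 1/2)
    (X : Set ℕ) (n : ℕ) {W : Set (ℕ → Bool)} (hWm : MeasurableSet W)
    (hdet : ∀ x y : ℕ → Bool, (∀ i, i < n → x i = y i) → x ∈ W → y ∈ W) :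
    μ (phi X ⁻¹' W) ≤ 2 ^ ((X ∩ Set.Iio n).ncard) * μ W := by
  classical
  have hfin : (X ∩ Set.Iio n).Finite := Set.Finite.inter_of_right (Set.finite_Iio n) X
  have hsub : phi X ⁻¹' W ⊆
      ⋃ t ∈ hfin.toFinset.powerset, xorMap (fun i => decide (i ∈ t)) ⁻¹' W := by
    intro x hx
    have hmem : hfin.toFinset.filter (fun i => x i = false) ∈ hfin.toFinset.powerset :=
      Finset.mem_powerset.2 (Finset.filter_subset _ _)
    refine Set.mem_biUnion hmem ?_
    show xorMap _ x ∈ W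
    refine hdet (phi X x) _ (fun i hi => ?_) hx
    by_cases hiX : i ∈ X
    · have hisF : i ∈ hfin.toFinset := by
        rw [Set.Finite.mem_toFinset]
        exact ⟨hiX, hi⟩
      cases hxi : x i
      · have hit : i ∈ hfin.toFinset.filter (fun i => x i = false) :=
          Finset.mem_filter.2 ⟨hisF, hxi⟩
        simp [phi, hiX, xorMap, hit, hxi, hi]
      · have hit : i ∉ hfin.toFinset.filter (fun i => x i = false) := by
          rw [Finset.mem_filter]
          rintro ⟨-, h⟩
          rw [hxi] at h
          simp at h
        simp [phi, hiX, xorMap, hit, hxi, hi]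
    · have hit : i ∉ hfin.toFinset.filter (fun i => x i = false) := by
        rw [Finset.mem_filter]
        rintro ⟨hisF, -⟩
        rw [Set.Finite.mem_toFinset] at hisF
        exact hiX hisF.1
      simp [phi, hiX, xorMap, hit, hi]
  have hMP : ∀ g : ℕ → Bool, MeasurePreserving (xorMap g) μ μ :=
    fun g => ⟨measurable_xorMap g, map_xorMap hμ g⟩
  calc μ (phi X ⁻¹' W)
      ≤ μ (⋃ t ∈ hfin.toFinset.powerset, xorMap (fun i => decide (i ∈ t)) ⁻¹' W) :=
        measure_mono hsub
    _ ≤ ∑ t ∈ hfin.toFinset.powerset, μ (xorMap (fun i => decide (i ∈ t)) ⁻¹' W) :=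
        measure_biUnion_finset_le _ _
    _ = ∑ t ∈ hfin.toFinset.powerset, μ W := Finset.sum_congr rfl fun t _ =>
        (hMP _).measure_preimage hWm.nullMeasurableSet
    _ = (hfin.toFinset.powerset.card : ℝ≥0∞) * μ W := by rw [Finset.sum_const, nsmul_eq_mul]
    _ = 2 ^ ((X ∩ Set.Iio n).ncard) * μ W := by
        rw [Finset.card_powerset, Set.ncard_eq_toFinset_card (X ∩ Set.Iio n) hfin]
        norm_cast

lemma ite_tail (c : ℕ → ℝ≥0∞) (m : ℕ) :
    ∑' n, (if m ≤ n then c n else 0) = ∑' i, c (i + m) := by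
  have h := Summable.sum_add_tsum_nat_add' (f := fun n => if m ≤ n then c n else 0) (k := m) ENNReal.summable
  have h1 : ∑ i ∈ Finset.range m, (if m ≤ i then c i else 0) = 0 := by
    refine Finset.sum_eq_zero fun i hi => ?_
    rw [Finset.mem_range] at hi
    rw [if_neg (by omega)]
  have h2 : ∀ i : ℕ, (if m ≤ i + m then c (i + m) else 0) = c (i + m) := fun i =>
    if_pos (by omega)
  rw [h1, zero_add, tsum_congr h2] at h
  exact h.symm

lemma tail_antitone (c : ℕ → ℝ≥0∞) {m m' : ℕ} (h : m ≤ m') :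
    ∑' i, c (i + m') ≤ ∑' i, c (i + m) := by
  have : ∀ i, c (i + m') = (fun j => c (j + m)) (i + (m' - m)) := fun i => by
    simp only []
    congr 1
    omega
  rw [tsum_congr this]
  exact ENNReal.tsum_comp_le_tsum_of_injective (add_left_injective _) _

end RapidAux

theorem rapid_filter_nonmeasurable (μ : Measure (ℕ → Bool))
    (hμ : IsBernoulli μ fun _ => 1 / 2)
    (F : Filter ℕ) [F.NeBot] (hF : F ≤ Filter.cofinite)
    (hrapid : ∀ f : ℕ → ℕ, StrictMono f →
      ∃ X ∈ F, ∀ n, (X ∩ Set.Iio (f n)).ncard ≤ n) :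
    ¬ NullMeasurableSet (filterSet F) μ := by
  classical
  intro hm
  haveI := hμ.1
  have hA0 : μ (filterSet F) = 0 := RapidAux.filterSet_null hμ hF hm
  obtain ⟨U, hAU, hUopen, hUlt⟩ := Set.exists_isOpen_lt_of_lt (filterSet F) 2⁻¹
    (by rw [hA0]; exact ENNReal.inv_pos.2 ENNReal.ofNat_ne_top)
  -- determined approximations from inside
  set R : ℕ → Set (ℕ → Bool) :=
    fun n => {x | ∀ y : ℕ → Bool, (∀ i, i < n → y i = x i) → y ∈ U} with hR
  have hRdet : ∀ n (x y : ℕ → Bool), (∀ i, i < n → x i = y i) → x ∈ R n → y ∈ R n := by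
    intro n x y hagree hx z hz
    exact hx z fun i hi => (hz i hi).trans (hagree i hi).symm
  have hRmeas : ∀ n, MeasurableSet (R n) := fun n => RapidAux.measurable_of_determined (hRdet n)
  have hRsub : ∀ n, R n ⊆ U := fun n x hx => hx x fun _ _ => rfl
  have hRmono : ∀ n, R n ⊆ R (n + 1) := fun n x hx z hz => hx z fun i hi => hz i (by omega)
  have hUR : U ⊆ ⋃ n, R n := by
    intro x hx
    obtain ⟨I, u, hu, hIu⟩ := isOpen_pi_iff.1 hUopen x hx
    refine Set.mem_iUnion.2 ⟨(I.sup id) + 1, fun y hy => hIu ?_⟩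
    intro i hiI
    have hyx : y i = x i := hy i (by have := Finset.le_sup (f := id) hiI; simp at this; omega)
    rw [hyx]
    exact (hu i hiI).2
  set W : ℕ → Set (ℕ → Bool) :=
    fun n => Nat.casesOn n (R 0) (fun k => R (k + 1) \ R k) with hW
  have hWmeas : ∀ n, MeasurableSet (W n) := by
    intro n
    cases n with
    | zero => exact hRmeas 0
    | succ k => exact (hRmeas (k + 1)).diff (hRmeas k)
  have hWdet : ∀ n (x y : ℕ → Bool), (∀ i, i < n → x i = y i) → x ∈ W n → y ∈ W n := by
    intro n
    cases n with
    | zero => exact fun x y h hx => hRdet 0 x y h hx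
    | succ k =>
        intro x y h hx
        refine ⟨hRdet (k + 1) x y h hx.1, fun hy => hx.2 ?_⟩
        exact hRdet k y x (fun i hi => (h i (by omega)).symm) hy
  have hRW : ∀ n, R n ⊆ ⋃ m, W m := by
    intro n
    induction n with
    | zero => exact fun x hx => Set.mem_iUnion.2 ⟨0, hx⟩
    | succ k ih =>
        intro x hx
        by_cases hxk : x ∈ R k
        · exact ih hxk
        · exact Set.mem_iUnion.2 ⟨k + 1, ⟨hx, hxk⟩⟩
  set c : ℕ → ℝ≥0∞ := fun n => μ (W n) with hc
  have hpartial : ∀ N, ∑ n ∈ Finset.range (N + 1), c n = μ (R N) := by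
    intro N
    induction N with
    | zero => simp [hc, hW]
    | succ k ih =>
        rw [Finset.sum_range_succ, ih]
        have hadd : μ (R k) + μ (R (k + 1) \ R k) = μ (R k ∪ R (k + 1)) :=
          measure_add_diff (hRmeas k).nullMeasurableSet (R (k + 1))
        rw [Set.union_eq_self_of_subset_left (hRmono k)] at hadd
        exact hadd
  have hcsum : ∑' n, c n ≤ μ U := by
    rw [ENNReal.tsum_eq_iSup_nat]
    refine iSup_le fun N => ?_
    cases N with
    | zero => simp
    | succ k => rw [hpartial k]; exact measure_mono (hRsub k)
  have hctop : ∑' n, c n ≠ ⊤ :=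
    (hcsum.trans_lt (hUlt.trans (by simp [ENNReal.inv_lt_top]))).ne
  -- choose the fast function f
  have htail : ∀ k : ℕ, ∃ m : ℕ, ∀ m' ≥ m, (∑' i, c (i + m')) ≤ 2⁻¹ ^ (4 * k + 4) := by
    intro k
    have h0 : (0 : ℝ≥0∞) < 2⁻¹ ^ (4 * k + 4) :=
      ENNReal.pow_pos (ENNReal.inv_pos.2 ENNReal.ofNat_ne_top) _
    have hev := (ENNReal.tendsto_sum_nat_add c hctop).eventually (gt_mem_nhds h0)
    obtain ⟨m, hm⟩ := Filter.eventually_atTop.1 hev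
    exact ⟨m, fun m' hm' => (hm m' hm').le⟩
  set g : ℕ → ℕ := fun k => Classical.choose (htail k) with hg
  have hgspec : ∀ k, ∀ m' ≥ g k, (∑' i, c (i + m')) ≤ 2⁻¹ ^ (4 * k + 4) :=
    fun k => Classical.choose_spec (htail k)
  set f : ℕ → ℕ := fun k => Nat.rec (g 0) (fun k ih => max (g (k + 1)) (ih + 1)) k with hf
  have hfsucc : ∀ k, f (k + 1) = max (g (k + 1)) (f k + 1) := fun k => rfl
  have hfmono : StrictMono f := strictMono_nat_of_lt_succ fun k => by
    rw [hfsucc k]; exact lt_of_lt_of_le (Nat.lt_succ_self _) (le_max_right _ _)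
  have hfg : ∀ k, g k ≤ f k := by
    intro k
    cases k with
    | zero => exact le_refl _
    | succ k => rw [hfsucc k]; exact le_max_left _ _
  have htailf : ∀ k, (∑' i, c (i + (f k + 1))) ≤ 2⁻¹ ^ (4 * k + 4) :=
    fun k => hgspec k (f k + 1) (le_trans (hfg k) (Nat.le_succ _))
  -- get the rapid witness
  obtain ⟨X, hXF, hXc⟩ := hrapid f hfmono
  -- push forward by phi X
  have hphiU : μ (RapidAux.phi X ⁻¹' U) = 1 := by
    have huniv : RapidAux.phi X ⁻¹' U = Set.univ :=
      Set.eq_univ_of_forall fun x => hAU (RapidAux.phi_mem_filterSet hXF x)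
    rw [huniv, measure_univ]
  have hUW : U ⊆ ⋃ m, W m := fun x hx => by
    obtain ⟨n, hn⟩ := Set.mem_iUnion.1 (hUR hx)
    exact hRW n hn
  have hcover1 : (1 : ℝ≥0∞) ≤ ∑' n, μ (RapidAux.phi X ⁻¹' W n) := by
    calc (1 : ℝ≥0∞) = μ (RapidAux.phi X ⁻¹' U) := hphiU.symm
      _ ≤ μ (RapidAux.phi X ⁻¹' ⋃ m, W m) := measure_mono (Set.preimage_mono hUW)
      _ = μ (⋃ m, RapidAux.phi X ⁻¹' W m) := by rw [Set.preimage_iUnion]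
      _ ≤ ∑' n, μ (RapidAux.phi X ⁻¹' W n) := measure_iUnion_le _
  have hkey : ∀ n, μ (RapidAux.phi X ⁻¹' W n) ≤ 2 ^ ((X ∩ Set.Iio n).ncard) * c n :=
    fun n => RapidAux.phi_bound hμ X n (hWmeas n) (hWdet n)
  set S : ℕ → ℝ≥0∞ := fun n => ∑' k, if f k < n then (2 : ℝ≥0∞) ^ (k + 1) else 0 with hS
  have hxmono : ∀ a b : ℕ, a ≤ b → (X ∩ Set.Iio a).ncard ≤ (X ∩ Set.Iio b).ncard := by
    intro a b hab
    exact Set.ncard_le_ncard (Set.inter_subset_inter_right X (Set.Iio_subset_Iio hab))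
      (Set.Finite.inter_of_right (Set.finite_Iio b) X)
  have hpow : ∀ n, (2 : ℝ≥0∞) ^ ((X ∩ Set.Iio n).ncard) ≤ 1 + S n := by
    intro n
    by_cases h0 : ∃ k, f k < n
    · obtain ⟨k0, hk0⟩ := h0
      have hk0n : k0 ≤ n := le_of_lt (lt_of_le_of_lt (hfmono.le_apply) hk0)
      set j := Nat.findGreatest (fun k => f k < n) n with hj
      have hjspec : f j < n := Nat.findGreatest_spec (P := fun k => f k < n) hk0n hk0
      have hjn : j ≤ n := Nat.findGreatest_le n
      have hjsucc : n ≤ f (j + 1) := by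
        by_contra hcon
        push_neg at hcon
        have hj1n : j + 1 ≤ n := lt_of_le_of_lt hfmono.le_apply hjspec
        have := Nat.le_findGreatest (P := fun k => f k < n) hj1n hcon
        omega
      have hxn : (X ∩ Set.Iio n).ncard ≤ j + 1 :=
        le_trans (hxmono n (f (j + 1)) hjsucc) (hXc (j + 1))
      calc (2 : ℝ≥0∞) ^ ((X ∩ Set.Iio n).ncard) ≤ 2 ^ (j + 1) :=
            pow_le_pow_right₀ one_le_two hxn
        _ ≤ S n := by
            rw [hS]
            have := ENNReal.le_tsum (f := fun k => if f k < n then (2 : ℝ≥0∞) ^ (k + 1) else 0) j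
            rwa [if_pos hjspec] at this
        _ ≤ 1 + S n := le_add_self
    · push_neg at h0
      have hn0 : n ≤ f 0 := h0 0
      have hxn : (X ∩ Set.Iio n).ncard = 0 :=
        Nat.le_zero.1 (le_trans (hxmono n (f 0) hn0) (hXc 0))
      rw [hxn, pow_zero]
      exact le_add_self.trans (by rw [add_comm])
  -- the tail sum bound
  have hSc : ∑' n, S n * c n ≤ 4⁻¹ := by
    have h1 : ∀ n, S n * c n = ∑' k, (if f k < n then (2 : ℝ≥0∞) ^ (k + 1) * c n else 0) := by
      intro n
      rw [hS, ← ENNReal.tsum_mul_right]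
      exact tsum_congr fun k => by rw [ite_mul, zero_mul]
    calc ∑' n, S n * c n
        = ∑' n, ∑' k, (if f k < n then (2 : ℝ≥0∞) ^ (k + 1) * c n else 0) := tsum_congr h1
      _ = ∑' k, ∑' n, (if f k < n then (2 : ℝ≥0∞) ^ (k + 1) * c n else 0) := ENNReal.tsum_comm
      _ = ∑' k, (2 : ℝ≥0∞) ^ (k + 1) * ∑' n, (if f k < n then c n else 0) := by
          refine tsum_congr fun k => ?_
          rw [← ENNReal.tsum_mul_left]
          exact tsum_congr fun n => by rw [mul_ite, mul_zero]
      _ ≤ ∑' k, (2 : ℝ≥0∞) ^ (k + 1) * 2⁻¹ ^ (4 * k + 4) := by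
          refine ENNReal.tsum_le_tsum fun k => mul_le_mul_right ?_ _
          have heq : ∑' n, (if f k < n then c n else 0) = ∑' i, c (i + (f k + 1)) := by
            rw [← RapidAux.ite_tail c (f k + 1)]
            exact tsum_congr fun n => if_congr (by omega) rfl rfl
          rw [heq]
          exact htailf k
      _ ≤ ∑' k, 2⁻¹ ^ k * 8⁻¹ := by
          refine ENNReal.tsum_le_tsum fun k => ?_
          have he1 : (2 : ℝ≥0∞) ^ (k + 1) * 2⁻¹ ^ (4 * k + 4) = 2⁻¹ ^ (3 * k + 3) := by
            have h4 : (2⁻¹ : ℝ≥0∞) ^ (4 * k + 4) = 2⁻¹ ^ (k + 1) * 2⁻¹ ^ (3 * k + 3) := by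
              rw [← pow_add]
              congr 1
              omega
            rw [h4, ← mul_assoc, ← mul_pow,
              ENNReal.mul_inv_cancel two_ne_zero ENNReal.ofNat_ne_top, one_pow, one_mul]
          rw [he1]
          have he2 : (2⁻¹ : ℝ≥0∞) ^ (3 * k + 3) ≤ 2⁻¹ ^ (k + 3) :=
            pow_le_pow_of_le_one zero_le (ENNReal.inv_le_one.2 one_le_two) (by omega)
          refine he2.trans ?_
          rw [show k + 3 = k + 3 from rfl, pow_add]
          have : (2⁻¹ : ℝ≥0∞) ^ 3 = 8⁻¹ := by
            rw [show (8 : ℝ≥0∞) = 2 ^ 3 by norm_num, ENNReal.inv_pow]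
          rw [this]
      _ = 4⁻¹ := by
          rw [ENNReal.tsum_mul_right, ENNReal.tsum_geometric, ENNReal.one_sub_inv_two,
            inv_inv]
          rw [show (8 : ℝ≥0∞) = 2 * 4 by norm_num, ENNReal.mul_inv (by norm_num) (by norm_num),
            ← mul_assoc, ENNReal.mul_inv_cancel two_ne_zero ENNReal.ofNat_ne_top, one_mul]
  have hfinal : (1 : ℝ≥0∞) ≤ 2⁻¹ + 4⁻¹ := by
    calc (1 : ℝ≥0∞) ≤ ∑' n, μ (RapidAux.phi X ⁻¹' W n) := hcover1
      _ ≤ ∑' n, (1 + S n) * c n :=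
          ENNReal.tsum_le_tsum fun n => (hkey n).trans (mul_le_mul_left (hpow n) _)
      _ = ∑' n, c n + ∑' n, S n * c n := by
          rw [← ENNReal.tsum_add]
          exact tsum_congr fun n => by rw [add_mul, one_mul]
      _ ≤ 2⁻¹ + 4⁻¹ := add_le_add (hcsum.trans hUlt.le) hSc
  have : (2⁻¹ + 4⁻¹ : ℝ≥0∞) < 1 := by
    rw [show (1 : ℝ≥0∞) = 2⁻¹ + 2⁻¹ by rw [ENNReal.inv_two_add_inv_two]]
    refine ENNReal.add_lt_add_left (by simp) ?_
    exact ENNReal.inv_lt_inv.2 (by norm_num)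
  exact absurd (lt_of_le_of_lt hfinal this) (lt_irrefl _)
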